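/- Let m ≥ 1 and let f, κ : ℝ^m → ℝ be twice continuously differentiable on a neighborhood of a point x ∈ ℝ^m, with κ strictly positive on that neighborhood. Then lim_{h→0⁺} (2(m+2)/(ν_m h^{m+2})) ∫_{B_h(x)} √(κ(x)κ(y)) (f(x) − f(y)) dy = − div(κ∇f)(x), where the integral is with respect to Lebesgue measure on ℝ^m. -/

import Mathlib

open MeasureTheory Filter Topology

/-- The Lebesgue volume of the unit ball in `ℝ^m`. -/
noncomputable def unitBallVol (m : ℕ) : ℝ :=
  (volume (Metric.ball (0 : EuclideanSpace ℝ (Fin m)) 1)).toReal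

/-- The divergence-form elliptic operator `div(κ∇f)(x) = ∑ i, ∂/∂x_i (κ ∂f/∂x_i)(x)`. -/
noncomputable def divKGrad (m : ℕ) (κ f : EuclideanSpace ℝ (Fin m) → ℝ)
    (x : EuclideanSpace ℝ (Fin m)) : ℝ :=
  ∑ i : Fin m,
    fderiv ℝ (fun y => κ y * fderiv ℝ f y (EuclideanSpace.single i 1)) x
      (EuclideanSpace.single i 1)

section Aux
open Metric

variable {m : ℕ}

/-- negate the i-th coordinate -/
noncomputable def negCoord (i : Fin m) : EuclideanSpace ℝ (Fin m) ≃ₗᵢ[ℝ] EuclideanSpace ℝ (Fin m) where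
  toLinearEquiv := LinearEquiv.ofInvolutive
    { toFun := fun z => WithLp.toLp 2 (fun k => if k = i then -z k else z k)
      map_add' := by intro a b; ext k; by_cases h : k = i <;> simp [h] <;> ring
      map_smul' := by intro c a; ext k; by_cases h : k = i <;> simp [h] <;> ring }
    (by intro z; ext k; by_cases h : k = i <;> simp [h])
  norm_map' := by
    intro z
    rw [EuclideanSpace.norm_eq, EuclideanSpace.norm_eq]
    congr 1
    refine Finset.sum_congr rfl fun k _ => ?_
    by_cases h : k = i <;> simp [LinearEquiv.ofInvolutive, h]

lemma negCoord_apply (i k : Fin m) (z : EuclideanSpace ℝ (Fin m)) :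
    negCoord i z k = if k = i then -z k else z k := rfl

lemma isometry_setIntegral (T : EuclideanSpace ℝ (Fin m) ≃ₗᵢ[ℝ] EuclideanSpace ℝ (Fin m))
    (g : EuclideanSpace ℝ (Fin m) → ℝ) (h : ℝ) :
    ∫ z in Metric.ball (0:EuclideanSpace ℝ (Fin m)) h, g (T z) = ∫ z in Metric.ball (0:EuclideanSpace ℝ (Fin m)) h, g z := by
  have hpre : T ⁻¹' (Metric.ball (0:EuclideanSpace ℝ (Fin m)) h) = Metric.ball 0 h := by
    ext z
    simp [Metric.mem_ball, dist_eq_norm, T.norm_map]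
  conv_lhs => rw [← hpre]
  exact T.measurePreserving.setIntegral_preimage_emb T.toHomeomorph.measurableEmbedding g _

lemma integral_norm_sq_ball (hm : 1 ≤ m) {h : ℝ} (hh : 0 < h) :
    ∫ z in Metric.ball (0:EuclideanSpace ℝ (Fin m)) h, ‖z‖^2 =
      (m : ℝ) / ((m:ℝ) + 2) * (unitBallVol m * h ^ (m + 2)) := by
  haveI : Nonempty (Fin m) := ⟨⟨0, hm⟩⟩
  haveI : Nontrivial (EuclideanSpace ℝ (Fin m)) := ⟨⟨0, EuclideanSpace.single ⟨0, hm⟩ 1, by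
    intro h0; have := congrArg (fun v : EuclideanSpace ℝ (Fin m) => v ⟨0, hm⟩) h0; simp at this⟩⟩
  have key := MeasureTheory.integral_fun_norm_addHaar (volume : Measure (EuclideanSpace ℝ (Fin m)))
    (fun r => Set.indicator (Set.Iio h) (fun r => r^2) r)
  have l1 : (fun z : EuclideanSpace ℝ (Fin m) => Set.indicator (Set.Iio h) (fun r => r^2) ‖z‖)
      = Set.indicator (Metric.ball (0:EuclideanSpace ℝ (Fin m)) h) (fun z => ‖z‖^2) := by
    funext z
    by_cases hz : ‖z‖ < h <;>
      simp [Set.indicator, mem_ball_zero_iff, hz]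
  rw [l1, integral_indicator measurableSet_ball] at key
  rw [key]
  have hdim : Module.finrank ℝ (EuclideanSpace ℝ (Fin m)) = m := finrank_euclideanSpace_fin
  rw [hdim]
  have l2 : ∀ y ∈ Set.Ioi (0:ℝ), y ^ (m - 1) • Set.indicator (Set.Iio h) (fun r => r^2) y
      = Set.indicator (Set.Iio h) (fun y : ℝ => y ^ (m+1)) y := by
    intro y _
    by_cases hy : y < h
    · have e : m - 1 + 2 = m + 1 := by omega
      simp only [Set.indicator, Set.mem_Iio, hy, if_true, smul_eq_mul, ← e, pow_add]
    · simp [Set.indicator, hy]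
  rw [setIntegral_congr_fun measurableSet_Ioi l2, setIntegral_indicator measurableSet_Iio]
  have : Set.Ioi (0:ℝ) ∩ Set.Iio h = Set.Ioo 0 h := by ext y; simp [and_comm]
  rw [this, ← MeasureTheory.integral_Ioc_eq_integral_Ioo,
    ← intervalIntegral.integral_of_le hh.le, integral_pow]
  unfold unitBallVol
  have h2 : ((m:ℝ) + 2) ≠ 0 := by positivity
  rw [nsmul_eq_mul, smul_eq_mul]
  push_cast
  rw [zero_pow (by omega : m + 2 ≠ 0), sub_zero]
  rw [measureReal_def]; ring

lemma cont_integrableOn {g : EuclideanSpace ℝ (Fin m) → ℝ} (hg : Continuous g)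
    (x : EuclideanSpace ℝ (Fin m)) (h : ℝ) : IntegrableOn g (Metric.ball x h) := by
  exact (hg.locallyIntegrable.integrableOn_isCompact (isCompact_closedBall x h)).mono_set
    ball_subset_closedBall

lemma integral_coord_mul (hm : 1 ≤ m) (i j : Fin m) {h : ℝ} (hh : 0 < h) :
    ∫ z in Metric.ball (0:EuclideanSpace ℝ (Fin m)) h, z i * z j =
      if i = j then unitBallVol m * h ^ (m + 2) / ((m:ℝ) + 2) else 0 := by
  have contc : ∀ k : Fin m, Continuous (fun z : EuclideanSpace ℝ (Fin m) => z k) :=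
    fun k => (EuclideanSpace.proj (𝕜 := ℝ) k).continuous
  by_cases hij : i = j
  · subst hij
    simp only [if_true]
    -- all coordinates have the same integral
    have hsame : ∀ k : Fin m,
        (∫ z in Metric.ball (0:EuclideanSpace ℝ (Fin m)) h, z k * z k)
        = ∫ z in Metric.ball (0:EuclideanSpace ℝ (Fin m)) h, z i * z i := by
      intro k
      have := isometry_setIntegral (LinearIsometryEquiv.piLpCongrLeft 2 ℝ ℝ (Equiv.swap k i))
        (fun z => z k * z k) h
      rw [← this]
      refine setIntegral_congr_fun measurableSet_ball fun z _ => ?_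
      have : (LinearIsometryEquiv.piLpCongrLeft 2 ℝ ℝ (Equiv.swap k i)) z k = z i := by
        rw [LinearIsometryEquiv.piLpCongrLeft_apply]
        simp only [Equiv.piCongrLeft'_apply, Equiv.symm_swap]
        rw [Equiv.swap_apply_left]
      rw [this]
    have hsum : ∑ k : Fin m, (∫ z in Metric.ball (0:EuclideanSpace ℝ (Fin m)) h, z k * z k)
        = ∫ z in Metric.ball (0:EuclideanSpace ℝ (Fin m)) h, ‖z‖^2 := by
      rw [← integral_finset_sum]
      · refine setIntegral_congr_fun measurableSet_ball fun z _ => ?_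
        rw [EuclideanSpace.norm_eq, Real.sq_sqrt (by positivity)]
        exact Finset.sum_congr rfl fun k _ => by rw [Real.norm_eq_abs, sq_abs, sq]
      · exact fun k _ => cont_integrableOn ((contc k).mul (contc k)) _ _
    rw [Finset.sum_congr rfl (fun k _ => hsame k), Finset.sum_const, Finset.card_univ,
      Fintype.card_fin, integral_norm_sq_ball hm hh] at hsum
    have hm0 : (m:ℝ) ≠ 0 := by positivity
    refine mul_left_cancel₀ hm0 ?_
    rw [← nsmul_eq_mul, hsum]
    ring
  · simp only [hij, if_false]
    have key := isometry_setIntegral (negCoord i) (fun z => z i * z j) h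
    have l : ∀ z ∈ Metric.ball (0:EuclideanSpace ℝ (Fin m)) h,
        (fun z : EuclideanSpace ℝ (Fin m) => z i * z j) (negCoord i z) = -(z i * z j) := by
      intro z _
      have h1 : negCoord i z i = -z i := by rw [negCoord_apply]; simp
      have h2 : negCoord i z j = z j := by rw [negCoord_apply]; simp [Ne.symm hij]
      simp only [h1, h2]; ring
    rw [setIntegral_congr_fun measurableSet_ball l, integral_neg] at key
    linarith

lemma integral_clm_ball (L : EuclideanSpace ℝ (Fin m) →L[ℝ] ℝ) (h : ℝ) :
    ∫ z in Metric.ball (0:EuclideanSpace ℝ (Fin m)) h, L z = 0 := by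
  have key := isometry_setIntegral (LinearIsometryEquiv.neg ℝ (E := EuclideanSpace ℝ (Fin m)))
    (fun z => L z) h
  have l : ∀ z ∈ Metric.ball (0:EuclideanSpace ℝ (Fin m)) h,
      (fun z : EuclideanSpace ℝ (Fin m) => L z) ((LinearIsometryEquiv.neg ℝ) z) = -(L z) := by
    intro z _; simp
  rw [setIntegral_congr_fun measurableSet_ball l, integral_neg] at key
  linarith

lemma euclidean_sum_single (z : EuclideanSpace ℝ (Fin m)) :
    z = ∑ i, z i • EuclideanSpace.single i (1:ℝ) := by
  ext k
  have h1 : (∑ i, z i • EuclideanSpace.single i (1:ℝ)) k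
      = ∑ i, (z i • EuclideanSpace.single i (1:ℝ)) k := by
    rw [WithLp.ofLp_sum]; exact Finset.sum_apply k Finset.univ _
  rw [h1]
  simp [EuclideanSpace.single_apply, PiLp.smul_apply, smul_eq_mul, Finset.sum_ite_eq]

lemma integral_bilin_ball (hm : 1 ≤ m)
    (B : EuclideanSpace ℝ (Fin m) →L[ℝ] EuclideanSpace ℝ (Fin m) →L[ℝ] ℝ) {h : ℝ} (hh : 0 < h) :
    ∫ z in Metric.ball (0:EuclideanSpace ℝ (Fin m)) h, B z z =
      (∑ i, B (EuclideanSpace.single i 1) (EuclideanSpace.single i 1)) *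
        (unitBallVol m * h ^ (m + 2) / ((m:ℝ) + 2)) := by
  have contc : ∀ k : Fin m, Continuous (fun z : EuclideanSpace ℝ (Fin m) => z k) :=
    fun k => (EuclideanSpace.proj (𝕜 := ℝ) k).continuous
  have expand : ∀ z : EuclideanSpace ℝ (Fin m), B z z
      = ∑ i, ∑ j, (z i * z j) * B (EuclideanSpace.single j 1) (EuclideanSpace.single i 1) := by
    intro z
    conv_lhs => rw [euclidean_sum_single z]
    simp only [map_sum, ContinuousLinearMap.coe_sum', Finset.sum_apply]
    refine Finset.sum_congr rfl fun i _ => Finset.sum_congr rfl fun j _ => ?_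
    rw [ContinuousLinearMap.map_smul, B.map_smul, ContinuousLinearMap.smul_apply,
      smul_eq_mul, smul_eq_mul]
    ring
  have integ : ∀ i j : Fin m, IntegrableOn (fun z : EuclideanSpace ℝ (Fin m) =>
      (z i * z j) * B (EuclideanSpace.single j 1) (EuclideanSpace.single i 1))
      (Metric.ball (0:EuclideanSpace ℝ (Fin m)) h) :=
    fun i j => cont_integrableOn (((contc i).mul (contc j)).mul continuous_const) _ _
  rw [setIntegral_congr_fun measurableSet_ball (fun z _ => expand z),
    integral_finset_sum _ (fun i _ => integrable_finset_sum _ (fun j _ => integ i j))]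
  have hterm : ∀ i : Fin m, (∫ z in Metric.ball (0:EuclideanSpace ℝ (Fin m)) h,
      ∑ j, (z i * z j) * B (EuclideanSpace.single j 1) (EuclideanSpace.single i 1))
      = B (EuclideanSpace.single i 1) (EuclideanSpace.single i 1) *
        (unitBallVol m * h ^ (m + 2) / ((m:ℝ) + 2)) := by
    intro i
    rw [integral_finset_sum _ (fun j _ => integ i j), Finset.sum_eq_single i]
    · rw [integral_mul_const, integral_coord_mul hm i i hh]
      simp [mul_comm]
    · intro j _ hj
      rw [integral_mul_const, integral_coord_mul hm i j hh, if_neg (fun hc => hj hc.symm),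
        zero_mul]
    · exact fun hi => (hi (Finset.mem_univ i)).elim
  rw [Finset.sum_congr rfl (fun i _ => hterm i), ← Finset.sum_mul]

set_option maxHeartbeats 2000000 in
lemma ball_avg (hm : 1 ≤ m) (g : EuclideanSpace ℝ (Fin m) → ℝ) (x : EuclideanSpace ℝ (Fin m))
    (hg : ContDiffAt ℝ 2 g x) (hgx : g x = 0) :
    Tendsto (fun h : ℝ => (2 * ((m : ℝ) + 2)) / (unitBallVol m * h ^ (m + 2)) *
        ∫ y in Metric.ball x h, g y) (𝓝[>] 0)
      (𝓝 (∑ i, fderiv ℝ (fun y => fderiv ℝ g y (EuclideanSpace.single i 1)) x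
        (EuclideanSpace.single i 1))) := by
  classical
  obtain ⟨t, htx, hgt⟩ := hg.contDiffOn le_rfl (by simp)
  obtain ⟨V, hVt, hVopen, hxV⟩ := _root_.mem_nhds_iff.mp htx
  obtain ⟨δ₀, hδ₀pos, hball₀⟩ := Metric.isOpen_iff.mp hVopen x hxV
  have hgV : ContDiffOn ℝ 2 g V := hgt.mono hVt
  have hdiff : ∀ y ∈ V, HasFDerivAt g (fderiv ℝ g y) y := fun y hy =>
    ((hgV.differentiableOn (by norm_num)).differentiableAt (hVopen.mem_nhds hy)).hasFDerivAt
  set L := fderiv ℝ g x with hL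
  set B := fderiv ℝ (fderiv ℝ g) x with hBdef
  have hBder : DifferentiableAt ℝ (fderiv ℝ g) x :=
    (hg.fderiv_right (m := 1) (by norm_num)).differentiableAt one_ne_zero
  have hBat : HasFDerivAt (fderiv ℝ g) B x := hBder.hasFDerivAt
  have hsymm : ∀ v w, B v w = B w v :=
    second_derivative_symmetric_of_eventually
      (Filter.eventually_of_mem (hVopen.mem_nhds hxV) fun y hy => hdiff y hy) hBat
  have hΛ : ∀ i : Fin m,
      fderiv ℝ (fun y => fderiv ℝ g y (EuclideanSpace.single i 1)) x (EuclideanSpace.single i 1)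
        = B (EuclideanSpace.single i 1) (EuclideanSpace.single i 1) := by
    intro i
    rw [fderiv_clm_apply hBder (differentiableAt_const _)]
    simp [hBdef]
  set Λ := ∑ i : Fin m, B (EuclideanSpace.single i 1) (EuclideanSpace.single i 1) with hΛdef
  have hgoalpt : (∑ i : Fin m, fderiv ℝ (fun y => fderiv ℝ g y (EuclideanSpace.single i 1)) x
      (EuclideanSpace.single i 1)) = Λ := Finset.sum_congr rfl fun i _ => hΛ i
  rw [hgoalpt]
  have hν : 0 < unitBallVol m := by
    unfold unitBallVol
    exact ENNReal.toReal_pos (measure_ball_pos volume 0 one_pos).ne' measure_ball_lt_top.ne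
  set φ : EuclideanSpace ℝ (Fin m) → ℝ :=
    fun y => g y - L (y - x) - (1/2) * B (y - x) (y - x) with hφdef
  have hφx : φ x = 0 := by simp [hφdef, hgx]
  -- derivative of φ on V
  have hφder : ∀ z ∈ V, HasFDerivAt φ (fderiv ℝ g z - L - B (z - x)) z := by
    intro z hz
    have h1 : HasFDerivAt (fun z : EuclideanSpace ℝ (Fin m) => z - x)
        (ContinuousLinearMap.id ℝ (EuclideanSpace ℝ (Fin m))) z := (hasFDerivAt_id z).sub_const x
    have h2 : HasFDerivAt (fun z : EuclideanSpace ℝ (Fin m) => L (z - x)) L z := by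
      have := L.hasFDerivAt.comp z h1
      rwa [ContinuousLinearMap.comp_id] at this
    have h3 : HasFDerivAt (fun z : EuclideanSpace ℝ (Fin m) => B (z - x)) B z := by
      have := B.hasFDerivAt.comp z h1
      rwa [ContinuousLinearMap.comp_id] at this
    have h4 : HasFDerivAt (fun z : EuclideanSpace ℝ (Fin m) => B (z - x) (z - x))
        ((B (z - x)).comp (ContinuousLinearMap.id ℝ (EuclideanSpace ℝ (Fin m)))
          + B.flip (z - x)) z := h3.clm_apply h1
    have h5 : HasFDerivAt (fun z : EuclideanSpace ℝ (Fin m) => (1/2 : ℝ) * (B (z - x) (z - x)))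
        ((1/2 : ℝ) • (B (z - x) + B.flip (z - x))) z := by
      have := h4.const_mul (1/2 : ℝ)
      simpa [ContinuousLinearMap.comp_id] using this
    have hq : ((1/2 : ℝ) • (B (z - x) + B.flip (z - x))) = B (z - x) := by
      ext w
      simp [ContinuousLinearMap.flip_apply]
      rw [hsymm w z, hsymm w x]
      ring
    rw [hq] at h5
    exact ((hdiff z hz).sub h2).sub h5
  rw [Metric.tendsto_nhdsWithin_nhds]
  intro ε hε
  set ε' := ε / (2 * (m:ℝ) + 2) with hε'def
  have hε'pos : 0 < ε' := by positivity
  obtain ⟨δ₁, hδ₁pos, hδ₁⟩ := Metric.eventually_nhds_iff.mp (hBat.isLittleO.def hε'pos)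
  set δ := min δ₀ δ₁ with hδdef
  have hδpos : 0 < δ := lt_min hδ₀pos hδ₁pos
  have hballδ : Metric.ball x δ ⊆ V := fun y hy =>
    hball₀ (mem_ball.mpr (lt_of_lt_of_le (mem_ball.mp hy) (min_le_left _ _)))
  -- bound on φ in ball x δ
  have hφbound : ∀ y, dist y x < δ → |φ y| ≤ ε' * ‖y - x‖^2 := by
    intro y hy
    have hsegball : segment ℝ x y ⊆ Metric.ball x δ :=
      (convex_ball x δ).segment_subset (mem_ball_self hδpos) (mem_ball.mpr hy)
    have hsegnorm : ∀ z ∈ segment ℝ x y, ‖z - x‖ ≤ ‖y - x‖ := by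
      intro z hz
      have : segment ℝ x y ⊆ Metric.closedBall x ‖y - x‖ :=
        (convex_closedBall x ‖y - x‖).segment_subset
          (mem_closedBall_self (norm_nonneg _)) (by simp [mem_closedBall, dist_eq_norm])
      simpa [mem_closedBall, dist_eq_norm] using this hz
    have key := Convex.norm_image_sub_le_of_norm_hasFDerivWithin_le
      (f := φ) (f' := fun z => fderiv ℝ g z - L - B (z - x))
      (s := segment ℝ x y) (C := ε' * ‖y - x‖)
      (fun z hz => ((hφder z (hballδ (hsegball hz))).hasFDerivWithinAt))
      (fun z hz => by
        have hzd : dist z x < δ₁ := lt_of_lt_of_le (mem_ball.mp (hsegball hz)) (min_le_right _ _)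
        have := hδ₁ hzd
        calc ‖fderiv ℝ g z - L - B (z - x)‖ ≤ ε' * ‖z - x‖ := this
          _ ≤ ε' * ‖y - x‖ := by
              exact mul_le_mul_of_nonneg_left (hsegnorm z hz) hε'pos.le)
      (convex_segment x y) (left_mem_segment ℝ x y) (right_mem_segment ℝ x y)
    rw [hφx, sub_zero] at key
    calc |φ y| = ‖φ y‖ := rfl
      _ ≤ ε' * ‖y - x‖ * ‖y - x‖ := key
      _ = ε' * ‖y - x‖^2 := by ring
  refine ⟨δ, hδpos, ?_⟩
  intro h hh hdist
  have hhpos : 0 < h := hh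
  have hhδ : h < δ := by
    rw [Real.dist_eq, sub_zero, abs_of_pos hhpos] at hdist; exact hdist
  have hhδ₀ : h < δ₀ := lt_of_lt_of_le hhδ (min_le_left _ _)
  have hballsub : Metric.closedBall x h ⊆ V := fun y hy =>
    hball₀ (lt_of_le_of_lt (mem_closedBall.mp hy) hhδ₀)
  -- translation
  have htrans : ∫ y in Metric.ball x h, g y
      = ∫ z in Metric.ball (0:EuclideanSpace ℝ (Fin m)) h, g (x + z) := by
    have hpre : (fun z : EuclideanSpace ℝ (Fin m) => x + z) ⁻¹' (Metric.ball x h)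
        = Metric.ball 0 h := by
      ext z
      simp [mem_ball, dist_eq_norm]
    conv_rhs => rw [← hpre]
    exact ((measurePreserving_add_left volume x).setIntegral_preimage_emb
      (Homeomorph.addLeft x).measurableEmbedding g _).symm
  have hgsplit : ∀ z ∈ Metric.ball (0:EuclideanSpace ℝ (Fin m)) h,
      g (x + z) = L z + (1/2) * B z z + φ (x + z) := by
    intro z _
    have e : x + z - x = z := by abel
    simp only [hφdef, e]
    ring
  -- integrability
  have hcontB : Continuous (fun z : EuclideanSpace ℝ (Fin m) => B z z) := by
    exact B.continuous₂.comp (continuous_id.prodMk continuous_id)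
  have hint1 : IntegrableOn (fun z : EuclideanSpace ℝ (Fin m) => L z) (Metric.ball 0 h) :=
    cont_integrableOn L.continuous _ _
  have hint2 : IntegrableOn (fun z : EuclideanSpace ℝ (Fin m) => (1/2) * B z z)
      (Metric.ball 0 h) := cont_integrableOn (continuous_const.mul hcontB) _ _
  have hφcont : ContinuousOn φ V := by
    refine ((hgV.continuousOn).sub ?_).sub ?_
    · exact (L.continuous.comp (continuous_id.sub continuous_const)).continuousOn
    · exact (continuous_const.mul
        ((hcontB.comp (continuous_id.sub continuous_const)))).continuousOn
  have hmaps : ∀ z ∈ Metric.closedBall (0:EuclideanSpace ℝ (Fin m)) h, x + z ∈ V := by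
    intro z hz
    apply hballsub
    simp only [mem_closedBall] at hz ⊢
    simpa [dist_eq_norm] using hz
  have hint3 : IntegrableOn (fun z : EuclideanSpace ℝ (Fin m) => φ (x + z))
      (Metric.ball 0 h) := by
    refine (ContinuousOn.integrableOn_compact (isCompact_closedBall _ _) ?_).mono_set
      ball_subset_closedBall
    exact hφcont.comp (continuous_const.add continuous_id).continuousOn hmaps
  have hsplit2 : ∫ z in Metric.ball (0:EuclideanSpace ℝ (Fin m)) h, g (x + z)
      = (1/2) * (Λ * (unitBallVol m * h ^ (m + 2) / ((m:ℝ) + 2)))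
        + ∫ z in Metric.ball (0:EuclideanSpace ℝ (Fin m)) h, φ (x + z) := by
    have e1 := integral_add (μ := volume.restrict (Metric.ball 0 h)) (hint1.add hint2) hint3
    simp only [Pi.add_apply] at e1
    have e2 := integral_add (μ := volume.restrict (Metric.ball 0 h)) hint1 hint2
    rw [setIntegral_congr_fun measurableSet_ball hgsplit, e1, e2,
      integral_clm_ball L h, MeasureTheory.integral_const_mul,
      integral_bilin_ball hm B hhpos, ← hΛdef]
    ring
  -- remainder bound
  set R := ∫ z in Metric.ball (0:EuclideanSpace ℝ (Fin m)) h, φ (x + z) with hRdef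
  have hRbound : |R| ≤ ε' * ((m : ℝ) / ((m:ℝ) + 2) * (unitBallVol m * h ^ (m + 2))) := by
    have h1 : |R| ≤ ∫ z in Metric.ball (0:EuclideanSpace ℝ (Fin m)) h, ε' * ‖z‖^2 := by
      rw [hRdef, ← Real.norm_eq_abs]
      refine (norm_integral_le_integral_norm _).trans ?_
      refine setIntegral_mono_on hint3.norm
        (cont_integrableOn (continuous_const.mul (continuous_norm.pow 2)) _ _)
        measurableSet_ball ?_
      intro z hz
      have hd : dist (x + z) x < δ := by
        have : ‖z‖ < h := by simpa [mem_ball, dist_eq_norm] using hz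
        calc dist (x + z) x = ‖z‖ := by simp [dist_eq_norm]
          _ < h := this
          _ < δ := hhδ
      have := hφbound (x + z) hd
      have e : x + z - x = z := by abel
      rw [e] at this
      simpa using this
    rw [MeasureTheory.integral_const_mul, integral_norm_sq_ball hm hhpos] at h1
    exact h1
  -- final computation
  have hfac : (2 * ((m : ℝ) + 2)) / (unitBallVol m * h ^ (m + 2))
      * ((1/2) * (Λ * (unitBallVol m * h ^ (m + 2) / ((m:ℝ) + 2)))) = Λ := by
    have hh1 : unitBallVol m * h ^ (m + 2) ≠ 0 := by positivity
    have hh2 : ((m:ℝ) + 2) ≠ 0 := by positivity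
    field_simp
  rw [Real.dist_eq, htrans, hsplit2, mul_add, hfac, add_comm, add_sub_assoc, sub_self, add_zero]
  have hfacpos : 0 < (2 * ((m : ℝ) + 2)) / (unitBallVol m * h ^ (m + 2)) := by positivity
  have h2m2 : (0:ℝ) < 2 * (m:ℝ) + 2 := by positivity
  have hfin : 2 * (m:ℝ) * ε' < ε := by
    rw [hε'def, show 2*(m:ℝ)*(ε/(2*(m:ℝ)+2)) = (2*(m:ℝ)*ε)/(2*(m:ℝ)+2) from by ring,
      div_lt_iff₀ h2m2]
    nlinarith [hε]
  calc |(2 * ((m : ℝ) + 2)) / (unitBallVol m * h ^ (m + 2)) * R|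
      = (2 * ((m : ℝ) + 2)) / (unitBallVol m * h ^ (m + 2)) * |R| := by
        rw [abs_mul, abs_of_pos hfacpos]
    _ ≤ (2 * ((m : ℝ) + 2)) / (unitBallVol m * h ^ (m + 2))
        * (ε' * ((m : ℝ) / ((m:ℝ) + 2) * (unitBallVol m * h ^ (m + 2)))) :=
        mul_le_mul_of_nonneg_left hRbound hfacpos.le
    _ = 2 * (m:ℝ) * ε' := by
        have hh1 : unitBallVol m * h ^ (m + 2) ≠ 0 := by positivity
        have hh2 : ((m:ℝ) + 2) ≠ 0 := by positivity
        field_simp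
    _ < ε := hfin

end Aux

open Metric in
set_option maxHeartbeats 1000000 in
theorem stmt_4 (m : ℕ) (hm : 1 ≤ m) (f κ : EuclideanSpace ℝ (Fin m) → ℝ)
    (x : EuclideanSpace ℝ (Fin m)) (U : Set (EuclideanSpace ℝ (Fin m)))
    (hU : IsOpen U) (hxU : x ∈ U) (hf : ContDiffOn ℝ 2 f U) (hκ : ContDiffOn ℝ 2 κ U)
    (hκpos : ∀ y ∈ U, 0 < κ y) :
    Tendsto (fun h : ℝ =>
        (2 * ((m : ℝ) + 2)) / (unitBallVol m * h ^ (m + 2)) *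
          ∫ y in Metric.ball x h, Real.sqrt (κ x * κ y) * (f x - f y))
      (𝓝[>] 0) (𝓝 (-(divKGrad m κ f x))) := by
  classical
  have hκx : 0 < κ x := hκpos x hxU
  set s : ℝ := Real.sqrt (κ x) with hs
  have hspos : 0 < s := Real.sqrt_pos.mpr hκx
  set w : EuclideanSpace ℝ (Fin m) → ℝ := fun y => Real.sqrt (κ y) with hw
  set g : EuclideanSpace ℝ (Fin m) → ℝ := fun y => (s * w y) * (f x - f y) with hgdef
  have hgeq : ∀ y, Real.sqrt (κ x * κ y) * (f x - f y) = g y := by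
    intro y
    rw [hgdef, Real.sqrt_mul hκx.le]
  have hfuneq : (fun h : ℝ => (2 * ((m : ℝ) + 2)) / (unitBallVol m * h ^ (m + 2)) *
      ∫ y in Metric.ball x h, Real.sqrt (κ x * κ y) * (f x - f y))
      = fun h : ℝ => (2 * ((m : ℝ) + 2)) / (unitBallVol m * h ^ (m + 2)) *
      ∫ y in Metric.ball x h, g y := by
    funext h
    simp only [hgeq]
  rw [hfuneq]
  have hκat : ContDiffAt ℝ 2 κ x := hκ.contDiffAt (hU.mem_nhds hxU)
  have hfat : ContDiffAt ℝ 2 f x := hf.contDiffAt (hU.mem_nhds hxU)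
  have hwat : ContDiffAt ℝ 2 w x := (Real.contDiffAt_sqrt hκx.ne').comp x hκat
  have hgat : ContDiffAt ℝ 2 g x :=
    (contDiffAt_const.mul hwat).mul (contDiffAt_const.sub hfat)
  have hgx0 : g x = 0 := by simp [hgdef]
  have main := ball_avg hm g x hgat hgx0
  suffices hlim : (∑ i, fderiv ℝ (fun y => fderiv ℝ g y (EuclideanSpace.single i 1)) x
      (EuclideanSpace.single i 1)) = -(divKGrad m κ f x) by
    rw [hlim] at main; exact main
  -- derivative facts on U
  have hfd : ∀ y ∈ U, HasFDerivAt f (fderiv ℝ f y) y := fun y hy =>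
    ((hf.differentiableOn (by norm_num)).differentiableAt (hU.mem_nhds hy)).hasFDerivAt
  have hwU : ContDiffOn ℝ 2 w U := fun y hy =>
    ((Real.contDiffAt_sqrt (hκpos y hy).ne').comp y
      (hκ.contDiffAt (hU.mem_nhds hy))).contDiffWithinAt
  have hwd : ∀ y ∈ U, HasFDerivAt w (fderiv ℝ w y) y := fun y hy =>
    ((hwU.differentiableOn (by norm_num)).differentiableAt (hU.mem_nhds hy)).hasFDerivAt
  have hgd : ∀ y ∈ U, HasFDerivAt g
      ((s * w y) • (-(fderiv ℝ f y)) + (f x - f y) • (s • fderiv ℝ w y)) y := by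
    intro y hy
    exact ((hwd y hy).const_mul s).mul ((hfd y hy).const_sub (f x))
  have hκdx : DifferentiableAt ℝ κ x :=
    (hκ.differentiableOn (by norm_num)).differentiableAt (hU.mem_nhds hxU)
  have hfdx : DifferentiableAt ℝ f x :=
    (hf.differentiableOn (by norm_num)).differentiableAt (hU.mem_nhds hxU)
  -- C¹ of fderivs
  have hf1 : ContDiffOn ℝ 1 (fderiv ℝ f) U := hf.fderiv_of_isOpen hU (by norm_num)
  have hw1 : ContDiffOn ℝ 1 (fderiv ℝ w) U := hwU.fderiv_of_isOpen hU (by norm_num)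
  have hfderivdx : DifferentiableAt ℝ (fderiv ℝ f) x :=
    (hf1.differentiableOn one_ne_zero).differentiableAt (hU.mem_nhds hxU)
  have hwderivdx : DifferentiableAt ℝ (fderiv ℝ w) x :=
    (hw1.differentiableOn one_ne_zero).differentiableAt (hU.mem_nhds hxU)
  -- value of fderiv w x
  have hwx' : HasFDerivAt w ((1/(2*s)) • fderiv ℝ κ x) x :=
    (Real.hasDerivAt_sqrt hκx.ne').comp_hasFDerivAt x hκdx.hasFDerivAt
  have hwfx : fderiv ℝ w x = (1/(2*s)) • fderiv ℝ κ x := hwx'.fderiv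
  rw [divKGrad, ← Finset.sum_neg_distrib]
  refine Finset.sum_congr rfl fun i _ => ?_
  set v := EuclideanSpace.single i (1:ℝ) with hv
  set c : EuclideanSpace ℝ (Fin m) → ℝ := fun y => fderiv ℝ f y v with hc
  set d : EuclideanSpace ℝ (Fin m) → ℝ := fun y => fderiv ℝ w y v with hd
  have hcdx : DifferentiableAt ℝ c x := hfderivdx.clm_apply (differentiableAt_const _)
  have hddx : DifferentiableAt ℝ d x := hwderivdx.clm_apply (differentiableAt_const _)
  -- eventual formula for fderiv g applied to v
  have hev : (fun y => fderiv ℝ g y v) =ᶠ[𝓝 x]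
      (fun y => (s * w y) * (-(c y)) + (f x - f y) * (s * d y)) := by
    refine Filter.eventually_of_mem (hU.mem_nhds hxU) fun y hy => ?_
    show fderiv ℝ g y v = s * w y * (-(c y)) + (f x - f y) * (s * d y)
    rw [(hgd y hy).fderiv]
    simp only [ContinuousLinearMap.add_apply, ContinuousLinearMap.smul_apply,
      ContinuousLinearMap.neg_apply, smul_eq_mul, hc, hd]
  have hPQ : HasFDerivAt (fun y => (s * w y) * (-(c y)) + (f x - f y) * (s * d y))
      (((s * w x) • (-(fderiv ℝ c x)) + (-(c x)) • (s • fderiv ℝ w x))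
        + ((f x - f x) • (s • fderiv ℝ d x) + (s * d x) • (-(fderiv ℝ f x)))) x := by
    exact (((hwd x hxU).const_mul s).mul hcdx.hasFDerivAt.neg).add
      ((hfdx.hasFDerivAt.const_sub (f x)).mul (hddx.hasFDerivAt.const_mul s))
  have hLHS : fderiv ℝ (fun y => fderiv ℝ g y v) x v
      = (s * w x) * (-(fderiv ℝ c x v)) + (-(c x)) * (s * (fderiv ℝ w x v))
        + (s * d x) * (-(fderiv ℝ f x v)) := by
    rw [hev.fderiv_eq, hPQ.fderiv]
    simp only [ContinuousLinearMap.add_apply, ContinuousLinearMap.smul_apply,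
      ContinuousLinearMap.neg_apply, smul_eq_mul, sub_self, zero_mul]
    ring
  have hRHS : fderiv ℝ (fun y => κ y * fderiv ℝ f y v) x v
      = κ x * fderiv ℝ c x v + c x * fderiv ℝ κ x v := by
    have : HasFDerivAt (fun y => κ y * c y) (κ x • fderiv ℝ c x + c x • fderiv ℝ κ x) x :=
      hκdx.hasFDerivAt.mul hcdx.hasFDerivAt
    rw [show (fun y => κ y * fderiv ℝ f y v) = fun y => κ y * c y from rfl, this.fderiv]
    simp [smul_eq_mul]
  rw [hLHS, hRHS]
  -- numerical identities
  have hwxx : w x = s := rfl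
  have hss : s * s = κ x := Real.mul_self_sqrt hκx.le
  have hwxv : fderiv ℝ w x v = (1/(2*s)) * fderiv ℝ κ x v := by rw [hwfx]; simp [smul_eq_mul]
  have hdx : d x = (1/(2*s)) * fderiv ℝ κ x v := hwxv
  have hcx : c x = fderiv ℝ f x v := rfl
  rw [hwxx, hdx, hwxv, hcx, ← hss]
  have hsne : s ≠ 0 := hspos.ne'
  field_simp
  ring
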